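/- Let G be the 4-uniform hypergraph on vertex set {a,b} with hyperedges {aaaa, aaab, bbbb}, and let g = h_prod : F^4 → F be the product map g(x_1,x_2,x_3,x_4) = x_1 x_2 x_3 x_4 (i.e. d = 1). Then G is globally g-rigid. -/

import Mathlib

open scoped BigOperators

variable {𝕜 : Type*} [RCLike 𝕜]

/-- `g : (𝕜^ι)^k → 𝕜` is a polynomial map. -/
def IsPolyMap {k : ℕ} {ι : Type*} [Fintype ι] (g : (Fin k → ι → 𝕜) → 𝕜) : Prop :=
  ∃ P : MvPolynomial (Fin k × ι) 𝕜,
    ∀ x, g x = MvPolynomial.eval (fun q => x q.1 q.2) P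

/-- `g` is symmetric in its `k` arguments. -/
def IsSymMap {k : ℕ} {ι : Type*} (g : (Fin k → ι → 𝕜) → 𝕜) : Prop :=
  ∀ (σ : Equiv.Perm (Fin k)) (x : Fin k → ι → 𝕜), g (x ∘ σ) = g x

/-- The affine transformation `γ = (A, t)` applied to a point `x`. -/
def affApply {ι : Type*} [Fintype ι] (γ : Matrix ι ι 𝕜 × (ι → 𝕜)) (x : ι → 𝕜) : ι → 𝕜 :=
  γ.1.mulVec x + γ.2

/-- The stabilizer `Γ_g` of `g`: invertible affine transformations preserving `g`. -/
def Stab {k : ℕ} {ι : Type*} [Fintype ι] [DecidableEq ι] (g : (Fin k → ι → 𝕜) → 𝕜) :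
    Set (Matrix ι ι 𝕜 × (ι → 𝕜)) :=
  {γ | IsUnit γ.1 ∧ ∀ x : Fin k → ι → 𝕜, g (fun i => affApply γ (x i)) = g x}

/-- The `g`-measurement map of a `k`-uniform hypergraph with hyperedge set `E`. -/
def measMap {V : Type*} {k : ℕ} {ι : Type*} [Fintype ι]
    (E : Finset (Fin k → V)) (g : (Fin k → ι → 𝕜) → 𝕜)
    (p : V → ι → 𝕜) : E → 𝕜 :=
  fun e => g (fun i => p (e.1 i))

/-- The Lie algebra of the stabilizer of `g`: infinitesimal affine transformations
annihilated by the derivative of `g` everywhere. -/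
def lieStab {k : ℕ} {ι : Type*} [Fintype ι] (g : (Fin k → ι → 𝕜) → 𝕜) :
    Set (Matrix ι ι 𝕜 × (ι → 𝕜)) :=
  {γ | ∀ x : Fin k → ι → 𝕜, fderiv 𝕜 g x (fun i => γ.1.mulVec (x i) + γ.2) = 0}

/-- The dimension `d_{Γ_g}` of the stabilizer of `g` (dimension of its Lie algebra). -/
noncomputable def stabDim {k : ℕ} {ι : Type*} [Fintype ι]
    (g : (Fin k → ι → 𝕜) → 𝕜) : ℕ :=
  Module.finrank 𝕜 ↥(Submodule.span 𝕜 (lieStab g))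

/-- The set of trivial infinitesimal `g`-motions of a configuration `p`. -/
def trivMotions {V : Type*} {k : ℕ} {ι : Type*} [Fintype ι]
    (g : (Fin k → ι → 𝕜) → 𝕜) (p : V → ι → 𝕜) : Set (V → ι → 𝕜) :=
  {p' | ∃ γ ∈ lieStab g, p' = fun v => γ.1.mulVec (p v) + γ.2}

/-- The dimension of the space of trivial infinitesimal `g`-motions. -/
noncomputable def trivDim {V : Type*} {k : ℕ} {ι : Type*} [Fintype ι]
    (g : (Fin k → ι → 𝕜) → 𝕜) (p : V → ι → 𝕜) : ℕ :=
  Module.finrank 𝕜 ↥(Submodule.span 𝕜 (trivMotions g p))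

/-- `(G,p)` is infinitesimally `g`-rigid:
`dim ker J f_{g,G}(p) = dim triv_g(p)`. -/
noncomputable def InfRigid {V : Type*} [Fintype V] {k : ℕ} {ι : Type*} [Fintype ι]
    (E : Finset (Fin k → V)) (g : (Fin k → ι → 𝕜) → 𝕜) (p : V → ι → 𝕜) : Prop :=
  Module.finrank 𝕜 ↥(LinearMap.ker (fderiv 𝕜 (measMap E g) p).toLinearMap) = trivDim g p

/-- `(G,p)` is locally `g`-rigid. -/
def LocRigid {V : Type*} [Fintype V] {k : ℕ} {ι : Type*} [Fintype ι] [DecidableEq ι]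
    (E : Finset (Fin k → V)) (g : (Fin k → ι → 𝕜) → 𝕜) (p : V → ι → 𝕜) : Prop :=
  ∃ N : Set (V → ι → 𝕜), IsOpen N ∧ p ∈ N ∧
    ∀ q ∈ N, measMap E g q = measMap E g p →
      ∃ γ ∈ Stab g, q = fun v => affApply γ (p v)

/-- `(G,p)` is globally `g`-rigid. -/
def GlobRigid {V : Type*} {k : ℕ} {ι : Type*} [Fintype ι] [DecidableEq ι]
    (E : Finset (Fin k → V)) (g : (Fin k → ι → 𝕜) → 𝕜) (p : V → ι → 𝕜) : Prop :=
  ∀ q : V → ι → 𝕜, measMap E g q = measMap E g p →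
      ∃ γ ∈ Stab g, q = fun v => affApply γ (p v)

/-- A configuration is generic if the coordinates of its points are algebraically
independent over `ℚ`. -/
def GenericConf {V : Type*} {ι : Type*} (p : V → ι → 𝕜) : Prop :=
  AlgebraicIndependent ℚ (fun vi : V × ι => p vi.1 vi.2)

/-- A hypergraph is locally `g`-rigid if every generic framework is. -/
def HLocRigid {V : Type*} [Fintype V] {k : ℕ} {ι : Type*} [Fintype ι] [DecidableEq ι]
    (E : Finset (Fin k → V)) (g : (Fin k → ι → 𝕜) → 𝕜) : Prop :=
  ∀ p : V → ι → 𝕜, GenericConf p → LocRigid E g p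

/-- A hypergraph is globally `g`-rigid if every generic framework is. -/
def HGlobRigid {V : Type*} {k : ℕ} {ι : Type*} [Fintype ι] [DecidableEq ι]
    (E : Finset (Fin k → V)) (g : (Fin k → ι → 𝕜) → 𝕜) : Prop :=
  ∀ p : V → ι → 𝕜, GenericConf p → GlobRigid E g p

/-- the 4-uniform hypergraph on two vertices `a = 0`, `b = 1` with
hyperedges `{aaaa, aaab, bbbb}` is globally `g`-rigid for the product map
`g = h_prod : 𝕜^4 → 𝕜` (here `d = 1`). -/
theorem example_hypergraph_glob_rigid {𝕜 : Type*} [RCLike 𝕜] :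
    HGlobRigid
      ({(fun _ => 0), ![0, 0, 0, 1], (fun _ => 1)} : Finset (Fin 4 → Fin 2))
      (fun x : Fin 4 → Fin 1 → 𝕜 => ∏ i, x i 0) := by
  intro p hp q hq
  have ha : p 0 0 ≠ 0 := by
    have := hp.transcendental (0, 0)
    intro h; rw [h] at this; exact this isAlgebraic_zero
  have mem1 : (fun _ => 0 : Fin 4 → Fin 2) ∈
      ({(fun _ => 0), ![0, 0, 0, 1], (fun _ => 1)} : Finset (Fin 4 → Fin 2)) := by simp
  have mem2 : (![0, 0, 0, 1] : Fin 4 → Fin 2) ∈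
      ({(fun _ => 0), ![0, 0, 0, 1], (fun _ => 1)} : Finset (Fin 4 → Fin 2)) := by simp
  have e1raw := congrFun hq ⟨_, mem1⟩
  have e2raw := congrFun hq ⟨_, mem2⟩
  simp only [measMap, Fin.prod_univ_four, Matrix.cons_val_zero, Matrix.cons_val_one,
    Matrix.head_cons, Matrix.cons_val_two, Matrix.tail_cons, Matrix.cons_val_three] at e1raw e2raw
  set a := p 0 0 with ha'
  set b := p 1 0 with hb'
  set A := q 0 0 with hA'
  set B := q 1 0 with hB'
  have e1 : A ^ 4 = a ^ 4 := by linear_combination e1raw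
  have e2 : A ^ 3 * B = a ^ 3 * b := by linear_combination e2raw
  have hA0 : A ≠ 0 := by
    intro h
    rw [h] at e1
    have := e1.symm
    simp at this
    exact ha this
  set ζ : 𝕜 := A / a with hζ'
  have hζ0 : ζ ≠ 0 := div_ne_zero hA0 ha
  have hζ4 : ζ ^ 4 = 1 := by
    rw [hζ', div_pow, e1, div_self (pow_ne_zero _ ha)]
  have hAa : A = ζ * a := by rw [hζ', div_mul_cancel₀ _ ha]
  have key : a ^ 3 * (a * B) = a ^ 3 * (A * b) := by
    calc a ^ 3 * (a * B) = a ^ 4 * B := by ring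
    _ = A ^ 4 * B := by rw [e1]
    _ = A * (A ^ 3 * B) := by ring
    _ = A * (a ^ 3 * b) := by rw [e2]
    _ = a ^ 3 * (A * b) := by ring
  have key2 : a * B = A * b := mul_left_cancel₀ (pow_ne_zero 3 ha) key
  have hBb : B = ζ * b := by
    rw [hζ']
    field_simp
    linear_combination key2
  refine ⟨(ζ • 1, 0), ⟨?_, ?_⟩, ?_⟩
  · rw [Matrix.isUnit_iff_isUnit_det, Matrix.det_smul, Matrix.det_one]
    simpa using (isUnit_iff_ne_zero.mpr (pow_ne_zero 1 hζ0))
  · intro x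
    simp only [affApply, Matrix.smul_mulVec, Matrix.one_mulVec, add_zero,
      Pi.smul_apply, smul_eq_mul]
    rw [Finset.prod_mul_distrib, Finset.prod_const]
    simp [hζ4]
  · funext v j
    fin_cases j
    simp only [affApply, Matrix.smul_mulVec, Matrix.one_mulVec, add_zero,
      Pi.smul_apply, smul_eq_mul]
    fin_cases v
    · exact hAa
    · exact hBb
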